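/- Let N be a stable phylogenetic network on X, let M = U(N), and let C be an X-set of M. Then ξ̄_C⁺(V(M_C⁺)) ⊆ V(M)^C/∼. -/

import Mathlib

/- ------------------------------------------------------------------
Common combinatorial framework for phylogenetic networks, MUL-trees,
un-fold and fold-up operations, following Huber--Moulton--Scornavacca--
Steel and the paper "Three applications of un-fold/fold-up operations
for stable phylogenetic networks".

A `Net` is a rooted directed multigraph: `arcs u v` records the number
of parallel arcs from `u` to `v`.  Directed walks are recorded as lists
of *arc tokens* `(u, v, i)` (the `i`-th parallel arc from `u` to `v`),
so that parallel arcs give rise to different directed paths.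
------------------------------------------------------------------- -/

open Classical

universe u v w

namespace Phylo

/-- A rooted directed multigraph on the vertex type `V`:  `arcs u v` is the
number of parallel arcs from `u` to `v`, `verts` is the vertex set and
`root` the root. -/
structure Net (V : Type u) where
  verts : Set V
  arcs : V → V → ℕ
  root : V

/-- An arc token: `(u, v, i)` stands for the `i`-th parallel arc from `u` to `v`. -/
abbrev Arc (V : Type u) := V × V × ℕ

namespace Net

variable {V : Type u}

/-- The arc token `a` is a genuine arc of `N`. -/
def okArc (N : Net V) (a : Arc V) : Prop :=
  a.1 ∈ N.verts ∧ a.2.1 ∈ N.verts ∧ a.2.2 < N.arcs a.1 a.2.1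

/-- `l` is a directed walk (possibly trivial) starting at the vertex `u`,
recorded as the list of its arc tokens. -/
def WalkFrom (N : Net V) (u : V) (l : List (Arc V)) : Prop :=
  u ∈ N.verts ∧ (∀ a ∈ l, N.okArc a) ∧
    List.Chain' (fun a b : Arc V => a.2.1 = b.1) l ∧
    ∀ a ∈ l.head?, (a : Arc V).1 = u

/-- The end vertex of the walk `l` starting at `u`. -/
def endOf (u : V) (l : List (Arc V)) : V := (l.getLastD (u, u, 0)).2.1

/-- The list of vertices visited by a walk `l` starting at `u`. -/
def walkVerts (u : V) (l : List (Arc V)) : List V := u :: l.map (fun a => a.2.1)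

/-- The inner (non-endpoint) vertices of a walk `l` starting at `u`. -/
def innerVerts (u : V) (l : List (Arc V)) : List V := ((walkVerts u l).dropLast).drop 1

/-- `w` is *below* `u` (there is a directed path from `u` to `w`; every
vertex is below itself).  Equivalently, `u` is an *ancestor* of `w`. -/
def Reaches (N : Net V) (u w : V) : Prop := ∃ l, N.WalkFrom u l ∧ endOf u l = w

/-- The indegree of a vertex (counting parallel arcs). -/
noncomputable def inDeg (N : Net V) (v : V) : ℕ := ∑ᶠ u, N.arcs u v

/-- The outdegree of a vertex (counting parallel arcs). -/
noncomputable def outDeg (N : Net V) (v : V) : ℕ := ∑ᶠ u, N.arcs v u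

/-- A leaf is a vertex of outdegree zero. -/
def IsLeaf (N : Net V) (v : V) : Prop := v ∈ N.verts ∧ N.outDeg v = 0

/-- An interior vertex is a non-leaf vertex. -/
def IsInterior (N : Net V) (v : V) : Prop := v ∈ N.verts ∧ N.outDeg v ≠ 0

/-- A tree vertex is a vertex of indegree at most one. -/
def IsTreeVert (N : Net V) (v : V) : Prop := v ∈ N.verts ∧ N.inDeg v ≤ 1

/-- A hybrid vertex is a vertex of indegree at least two. -/
def IsHybrid (N : Net V) (v : V) : Prop := v ∈ N.verts ∧ 2 ≤ N.inDeg v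

/-- The one-step arc relation. -/
def ArcRel (N : Net V) (u v : V) : Prop := 0 < N.arcs u v

/-- `N` contains no directed cycle. -/
def Acyclic (N : Net V) : Prop := ∀ v, ¬ Relation.TransGen N.ArcRel v v

/-- A rooted connected pseudoDAG: a finite rooted directed (multi)graph with
no directed cycles in which every vertex is reachable from the root. -/
structure IsPseudoDAG (N : Net V) : Prop where
  finite : N.verts.Finite
  rootMem : N.root ∈ N.verts
  arcMem : ∀ u v, N.arcs u v ≠ 0 → u ∈ N.verts ∧ v ∈ N.verts
  acyclic : N.Acyclic
  connected : ∀ v ∈ N.verts, N.Reaches N.root v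

/-- An `X`-network: a rooted connected pseudoDAG whose leaf set is `X`, where
the root has indegree zero, every non-leaf tree vertex has outdegree two,
every hybrid vertex has outdegree one, and every leaf has total degree one. -/
structure IsXNetwork (N : Net V) (X : Set V) extends IsPseudoDAG N : Prop where
  rootInDeg : N.inDeg N.root = 0
  leafSet : ∀ v, N.IsLeaf v ↔ v ∈ X
  treeOutDeg : ∀ v ∈ N.verts, N.inDeg v ≤ 1 → N.outDeg v ≠ 0 → N.outDeg v = 2
  hybridOutDeg : ∀ v ∈ N.verts, 2 ≤ N.inDeg v → N.outDeg v = 1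
  leafInDeg : ∀ v ∈ X, N.inDeg v = 1

/-- No parallel arcs. -/
def NoParallel (N : Net V) : Prop := ∀ u v, N.arcs u v ≤ 1

/-- A phylogenetic network on `X`: an `X`-network without parallel arcs. -/
structure IsPhyloNetwork (N : Net V) (X : Set V) extends IsXNetwork N X : Prop where
  noParallel : N.NoParallel

/-- A phylogenetic tree on `X`: a phylogenetic network with no hybrid vertices. -/
structure IsPhyloTree (N : Net V) (X : Set V) extends IsPhyloNetwork N X : Prop where
  noHybrid : ∀ v, ¬ N.IsHybrid v

/-- A vertex with indegree one and outdegree one (to be suppressed). -/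
def Suppressible (N : Net V) (v : V) : Prop :=
  v ∈ N.verts ∧ N.inDeg v = 1 ∧ N.outDeg v = 1

/-- The graph obtained from `N` by suppressing all vertices of indegree one and
outdegree one: kept vertices are the non-suppressible ones, and the number of
arcs from `u` to `w` is the number of directed paths from `u` to `w` in `N`
all of whose inner vertices are suppressible. -/
noncomputable def suppr (N : Net V) : Net V where
  verts := {v ∈ N.verts | ¬ N.Suppressible v}
  arcs := fun u w =>
    if u ∈ N.verts ∧ ¬ N.Suppressible u ∧ w ∈ N.verts ∧ ¬ N.Suppressible w then
      Set.ncard {l : List (Arc V) | N.WalkFrom u l ∧ l ≠ [] ∧ endOf u l = w ∧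
        ∀ x ∈ innerVerts u l, N.Suppressible x}
    else 0
  root := N.root

/-- `g` realizes an isomorphism of rooted multigraphs from `N` to `N'`. -/
def NetIsoVia {W : Type w} (N : Net V) (N' : Net W) (g : V → W) : Prop :=
  Set.BijOn g N.verts N'.verts ∧
    (∀ u ∈ N.verts, ∀ v ∈ N.verts, N'.arcs (g u) (g v) = N.arcs u v) ∧
    g N.root = N'.root

/-- `w` is a vertex-stable ancestor of the leaf `x`: `w` is an interior vertex
lying on every directed path from the root to `x`. -/
def IsVSAncestor (N : Net V) (w x : V) : Prop :=
  N.IsInterior w ∧ N.IsLeaf x ∧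
    ∀ l, N.WalkFrom N.root l → endOf N.root l = x → w ∈ walkVerts N.root l

/-- `N` is tree-child: every interior vertex has a child that is a tree vertex. -/
def TreeChild (N : Net V) : Prop :=
  ∀ v, N.IsInterior v → ∃ u, 0 < N.arcs v u ∧ N.IsTreeVert u

/-- `N` is compressed: no arc has both its tail and its head hybrid. -/
def Compressed (N : Net V) : Prop :=
  ∀ u v, 0 < N.arcs u v → ¬(N.IsHybrid u ∧ N.IsHybrid v)

/-- `N` is reticulation-visible: every hybrid vertex is a vertex-stable
ancestor of some leaf. -/
def RetVisible (N : Net V) (X : Set V) : Prop :=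
  ∀ h, N.IsHybrid h → ∃ x ∈ X, N.IsVSAncestor h x

/-- The set of arc tokens used by a walk. -/
def arcsOf (l : List (Arc V)) : Set (Arc V) := {a | a ∈ l}

/-- The union of the directed paths `p₁` and `p₂` contains a subgraph that is
a reticulation cycle of `N`, i.e. the union of two arc-disjoint non-trivial
directed paths of `N` with the same start vertex and the same end vertex. -/
def ContainsRetCycle (N : Net V) (p₁ p₂ : List (Arc V)) : Prop :=
  ∃ (q₁ q₂ : List (Arc V)) (s e : V),
    N.WalkFrom s q₁ ∧ N.WalkFrom s q₂ ∧ q₁ ≠ [] ∧ q₂ ≠ [] ∧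
    endOf s q₁ = e ∧ endOf s q₂ = e ∧
    Disjoint (arcsOf q₁) (arcsOf q₂) ∧
    arcsOf q₁ ∪ arcsOf q₂ ⊆ arcsOf p₁ ∪ arcsOf p₂

/-- The set of vertices having a descendant in `Y`. -/
def keepSet (N : Net V) (Y : Set V) : Set V := {v ∈ N.verts | ∃ y ∈ Y, N.Reaches v y}

/-- The result of the leaf-removing operations applied to all leaves outside
`Y`: restrict to the vertices having a descendant in `Y` and suppress all
resulting vertices of indegree one and outdegree one. -/
noncomputable def restrictNet (N : Net V) (Y : Set V) : Net V :=
  Net.suppr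
    { verts := N.keepSet Y
      arcs := fun u w => if u ∈ N.keepSet Y ∧ w ∈ N.keepSet Y then N.arcs u w else 0
      root := N.root }

end Net

/-- A labelled rooted directed multigraph: the data of a MUL-tree on the
label set: `lab x` is the set of leaves labelled `x`. -/
structure LNet (V : Type u) (L : Type v) extends Net V where
  lab : L → Set V

namespace LNet

variable {V : Type u} {L : Type v}

/-- `M` is a MUL-tree on `X`: a rooted tree whose root has indegree `0`, with
no vertex of indegree one and outdegree one, in which every leaf carries
exactly one label from `X` and every label of `X` occurs. -/
structure IsMulTree (M : LNet V L) (X : Set L) : Prop where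
  pseudo : M.toNet.IsPseudoDAG
  rootInDeg : M.toNet.inDeg M.root = 0
  inDegOne : ∀ v ∈ M.verts, v ≠ M.root → M.toNet.inDeg v = 1
  noSupp : ∀ v, ¬ M.toNet.Suppressible v
  labLeaf : ∀ x ∈ X, ∀ l ∈ M.lab x, M.toNet.IsLeaf l
  labNonempty : ∀ x ∈ X, (M.lab x).Nonempty
  labCover : ∀ l, M.toNet.IsLeaf l → ∃! x, x ∈ X ∧ l ∈ M.lab x
  labOff : ∀ x, x ∉ X → M.lab x = ∅

/-- The set of vertices below `v`. -/
def belowSet (M : LNet V L) (v : V) : Set V := {w | M.toNet.Reaches v w}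

/-- The subMUL-tree `M_v` of `M` rooted at the vertex `v` (delete the incoming
arc of `v` and restrict the labelling). -/
noncomputable def subAt (M : LNet V L) (v : V) : LNet V L where
  verts := M.belowSet v
  arcs := fun u w => if u ∈ M.belowSet v ∧ w ∈ M.belowSet v then M.arcs u w else 0
  root := v
  lab := fun x => M.lab x ∩ M.belowSet v

/-- `η` realizes an isomorphism of MUL-trees (same label type). -/
def MulIsoVia {V' : Type w} (M : LNet V L) (M' : LNet V' L) (η : V → V') : Prop :=
  Set.BijOn η M.verts M'.verts ∧
    (∀ u ∈ M.verts, ∀ w ∈ M.verts, M'.arcs (η u) (η w) = M.arcs u w) ∧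
    η M.root = M'.root ∧
    ∀ x : L, η '' (M.lab x ∩ M.verts) = M'.lab x ∩ M'.verts

/-- Two labelled trees (on the same label type) are isomorphic. -/
def MulIso {V' : Type w} (M : LNet V L) (M' : LNet V' L) : Prop := ∃ η, MulIsoVia M M' η

/-- `η` realizes an isomorphism of MUL-trees on `X` modulo the label
translation `e`. -/
def MulIsoRelVia {V' : Type w} {L' : Type*} (M : LNet V L) (X : Set L)
    (M' : LNet V' L') (e : L → L') (η : V → V') : Prop :=
  Set.BijOn η M.verts M'.verts ∧
    (∀ u ∈ M.verts, ∀ w ∈ M.verts, M'.arcs (η u) (η w) = M.arcs u w) ∧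
    η M.root = M'.root ∧
    ∀ x ∈ X, η '' (M.lab x ∩ M.verts) = M'.lab (e x) ∩ M'.verts

/-- The equivalence relation `∼`: `u ∼ w` iff `u = w` or the subMUL-trees
`M_u` and `M_w` are isomorphic. -/
def Sim (M : LNet V L) (u w : V) : Prop := u = w ∨ MulIso (M.subAt u) (M.subAt w)

/-- The `∼`-equivalence class of `w`; the map `eqClass M : V(M) → V(M)/∼`
plays the role of the projection `p_M` onto the quotient. -/
def eqClass (M : LNet V L) (w : V) : Set V := {u ∈ M.verts | M.Sim u w}

/-- The quotient `V(M)/∼`, realized as the set of `∼`-equivalence classes. -/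
def classSet (M : LNet V L) : Set (Set V) := M.eqClass '' M.verts

/-- `c` is a `∼`-equivalence class of `M`. -/
def IsClassOf (M : LNet V L) (c : Set V) : Prop := ∃ w ∈ M.verts, c = M.eqClass w

/-- The class `c` gets a hybrid vertex above it in the fold-up of `M`:
some (equivalently, any) member of `c` has its parent in a strictly smaller
`∼`-class. -/
def ClassHyb (M : LNet V L) (c : Set V) : Prop :=
  ∃ w ∈ M.verts, c = M.eqClass w ∧ ∃ u, 0 < M.arcs u w ∧ (M.eqClass u).ncard < c.ncard

/-- `d` is the class of a parent of a member of `c`. -/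
def IsParentClassOf (M : LNet V L) (d c : Set V) : Prop :=
  ∃ u w, 0 < M.arcs u w ∧ d = M.eqClass u ∧ c = M.eqClass w

/-- The number of children inside `c` of a member of `d`. -/
noncomputable def childMult (M : LNet V L) (d c : Set V) : ℕ :=
  sSup {n : ℕ | ∃ u ∈ d, n = ∑ᶠ w ∈ c, M.arcs u w}

/-- The fold-up `F(M)` of the MUL-tree `M`: the `X`-network obtained by
repeatedly identifying all maximal inextendible subMUL-trees, subdividing
the incoming arcs of their roots and identifying the subdivision vertices.
Concretely, its tree vertices are the `∼`-classes of `M`, there is a hybrid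
vertex above each class whose members have parents in a strictly smaller
class, and arcs are induced by the arcs of `M`. -/
noncomputable def foldUp (M : LNet V L) : Net (Set V ⊕ Set V) where
  verts := (Sum.inl '' {c | M.IsClassOf c}) ∪
    (Sum.inr '' {c | M.IsClassOf c ∧ M.ClassHyb c})
  arcs := fun a b =>
    match a, b with
    | Sum.inl d, Sum.inl c =>
        if M.IsClassOf d ∧ M.IsClassOf c ∧ ¬ M.ClassHyb c ∧ M.IsParentClassOf d c
        then 1 else 0
    | Sum.inl d, Sum.inr c =>
        if M.IsClassOf d ∧ M.IsClassOf c ∧ M.ClassHyb c ∧ M.IsParentClassOf d c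
        then M.childMult d c else 0
    | Sum.inr c, Sum.inl c' =>
        if c' = c ∧ M.IsClassOf c ∧ M.ClassHyb c then 1 else 0
    | Sum.inr _, Sum.inr _ => 0
  root := Sum.inl (M.eqClass M.root)

/-- The `∼`-class of the leaves labelled `x`. -/
def labClass (M : LNet V L) (x : L) : Set V := {w ∈ M.verts | ∃ l ∈ M.lab x, M.Sim w l}

/-- The leaf set of the fold-up of `M`, identified with `X`. -/
def foldX (M : LNet V L) (X : Set L) : Set (Set V ⊕ Set V) :=
  (fun x => Sum.inl (M.labClass x)) '' X

/-- A MUL-tree is sound if its fold-up is a phylogenetic network. -/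
def IsSound (M : LNet V L) (X : Set L) : Prop :=
  M.IsMulTree X ∧ Net.IsPhyloNetwork M.foldUp (M.foldX X)

/-- An `X`-set of `M`: a set of leaves containing exactly one leaf labelled
`x` for every `x ∈ X`. -/
def IsXSet (M : LNet V L) (X : Set L) (C : Set V) : Prop :=
  (∀ l ∈ C, M.toNet.IsLeaf l) ∧ ∀ x ∈ X, ∃! l, l ∈ C ∧ l ∈ M.lab x

/-- `r` is the last common ancestor of the elements of `C`. -/
def IsLca (M : LNet V L) (r : V) (C : Set V) : Prop :=
  r ∈ M.verts ∧ (∀ c ∈ C, M.toNet.Reaches r c) ∧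
    ∀ r' ∈ M.verts, (∀ c ∈ C, M.toNet.Reaches r' c) → M.toNet.Reaches r' r

/-- The last common ancestor `r_C` of the elements of `C`. -/
noncomputable def lcaOf [Nonempty V] (M : LNet V L) (C : Set V) : V :=
  Classical.epsilon fun r => M.IsLca r C

/-- The vertex set of `M_C⁺`: all vertices on a directed path from
`lca(C)` to a leaf in `C`. -/
def subPlusVerts [Nonempty V] (M : LNet V L) (C : Set V) : Set V :=
  {v | M.toNet.Reaches (M.lcaOf C) v ∧ ∃ c ∈ C, M.toNet.Reaches v c}

/-- The tree `M_C⁺` spanned by the leaves in `C`; the canonical injection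
`ξ_C⁺ : V(M_C⁺) → V(M)` is the set-inclusion `subPlusVerts M C ⊆ V`, so that
the map `ξ̄_C⁺ = p_M ∘ ξ_C⁺` is realized by `eqClass M` restricted to
`subPlusVerts M C`. -/
noncomputable def subPlus [Nonempty V] (M : LNet V L) (C : Set V) : Net V where
  verts := M.subPlusVerts C
  arcs := fun u w => if u ∈ M.subPlusVerts C ∧ w ∈ M.subPlusVerts C then M.arcs u w else 0
  root := M.lcaOf C

/-- The phylogenetic tree `M_C` induced by the `X`-set `C`: suppress all
vertices of indegree one and outdegree one in `M_C⁺`. -/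
noncomputable def mC [Nonempty V] (M : LNet V L) (C : Set V) : Net V := (M.subPlus C).suppr

/-- The set `V(M)^C`: the vertex `r_C` together with all vertices `v` such
that no vertex below `v` is `∼`-equivalent to `r_C`. -/
def vmc [Nonempty V] (M : LNet V L) (C : Set V) : Set V :=
  insert (M.lcaOf C) {v ∈ M.verts | ∀ u, M.toNet.Reaches v u → ¬ M.Sim u (M.lcaOf C)}

/-- Vertices of `M` having a descendant leaf labelled by an element of `Y`. -/
def keepSet (M : LNet V L) (Y : Set L) : Set V :=
  {v ∈ M.verts | ∃ w, M.toNet.Reaches v w ∧ ∃ y ∈ Y, w ∈ M.lab y}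

/-- The MUL-tree `M_Y` obtained from `M` by the leaf-removing operation:
remove all leaves labelled outside `Y` (together with everything having no
leaf labelled in `Y` below it) and suppress all resulting vertices of
indegree one and outdegree one. -/
noncomputable def restrictMul (M : LNet V L) (Y : Set L) : LNet V L where
  toNet := Net.suppr
    { verts := M.keepSet Y
      arcs := fun u w => if u ∈ M.keepSet Y ∧ w ∈ M.keepSet Y then M.arcs u w else 0
      root := M.root }
  lab := fun y => if y ∈ Y then M.lab y else ∅

end LNet

namespace Net

variable {V : Type u}

/-- The vertex set of the un-fold `U(N)` of `N`: the set `π⁻(N)` of directed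
paths of `N` starting at the root and ending in a tree vertex.  (The
bijection `Ψ_N : π⁻(N) → V(U(N))` is thereby realized as the identity.) -/
def unfoldVerts (N : Net V) : Set (List (Arc V)) :=
  {p | N.WalkFrom N.root p ∧ N.IsTreeVert (endOf N.root p)}

/-- The un-fold `U(N)` of `N`, a MUL-tree on `X`: vertices are the directed
paths from the root ending in tree vertices, arcs correspond to extending
such a path by a single arc followed by a (possibly empty) run of hybrid
vertices, and the leaves labelled `x ∈ X` are the paths ending in `x`. -/
noncomputable def unfoldNet (N : Net V) (X : Set V) : LNet (List (Arc V)) V where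
  verts := unfoldVerts N
  arcs := fun p q =>
    if p ∈ unfoldVerts N ∧ q ∈ unfoldVerts N ∧
        ∃ r, r ≠ [] ∧ q = p ++ r ∧ ∀ a ∈ r.dropLast, N.IsHybrid (a : Arc V).2.1
    then 1 else 0
  root := []
  lab := fun x => if x ∈ X then {p ∈ unfoldVerts N | endOf N.root p = x} else ∅

end Net

/-- `N` is a stable phylogenetic network on `X`: `N` is a phylogenetic
network isomorphic to the fold-up of its un-fold, via an isomorphism fixing
`X` pointwise (i.e. sending each leaf `x` to the leaf of `F(U(N))`
corresponding to `x`). -/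
def IsStable {V : Type u} (N : Net V) (X : Set V) : Prop :=
  Net.IsPhyloNetwork N X ∧
    ∃ g, Net.NetIsoVia N (Net.unfoldNet N X).foldUp g ∧
      ∀ x ∈ X, g x = Sum.inl ((Net.unfoldNet N X).labClass x)

/-- `T` is endorsed by the MUL-tree `M` via the `X`-set `C`, the isomorphism
`T ≅ M_C` being realized by `σ` (which sends each `x ∈ X` to the unique leaf
of `C` labelled `x`). -/
def EndorsedVia {V : Type u} {W : Type w} [Nonempty W] (T : Net V) (X : Set V)
    (M : LNet W V) (C : Set W) (σ : V → W) : Prop :=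
  M.IsXSet X C ∧ Net.NetIsoVia T (M.mC C) σ ∧ ∀ x ∈ X, σ x ∈ C ∧ σ x ∈ M.lab x

/-- `T` is endorsed by the MUL-tree `M` via the `X`-set `C`. -/
def Endorsed {V : Type u} {W : Type w} [Nonempty W] (T : Net V) (X : Set V)
    (M : LNet W V) (C : Set W) : Prop :=
  ∃ σ, EndorsedVia T X M C σ

/-- `N'` is a subgraph of `N` with leaf set `X` which is (an isomorphic copy,
via the identity on `X`, of) a subdivision of `T`: suppressing all vertices
of indegree one and outdegree one in `N'` yields a tree isomorphic to `T`
via an isomorphism `g` fixing `X` pointwise. -/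
def IsDisplayWitness {V : Type u} (N : Net V) (X : Set V) (T : Net V)
    (N' : Net V) (g : V → V) : Prop :=
  N'.verts ⊆ N.verts ∧ (∀ u v, N'.arcs u v ≤ N.arcs u v) ∧
    N'.root ∈ N'.verts ∧ (∀ v ∈ N'.verts, N'.Reaches N'.root v) ∧
    (∀ v, N'.IsLeaf v ↔ v ∈ X) ∧
    Net.NetIsoVia T N'.suppr g ∧ ∀ x ∈ X, g x = x

/-- The phylogenetic tree `T` is displayed by `N`. -/
def Displays {V : Type u} (N : Net V) (X : Set V) (T : Net V) : Prop :=
  ∃ N' g, IsDisplayWitness N X T N' g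

/-- The phylogenetic tree `T` is strongly displayed by `N`: it is displayed
via a subdivision whose root is the root of `N`. -/
def StronglyDisplays {V : Type u} (N : Net V) (X : Set V) (T : Net V) : Prop :=
  ∃ N' g, IsDisplayWitness N X T N' g ∧ N'.root = N.root

/-- `G` is a rooted tree. -/
structure IsRootedTree {V : Type u} (G : Net V) : Prop where
  pseudo : G.IsPseudoDAG
  rootInDeg : G.inDeg G.root = 0
  inDegOne : ∀ v ∈ G.verts, v ≠ G.root → G.inDeg v = 1

/-- `T'` is a subdivision of `T` (with the identity on `X`): `T'` is a rooted
tree which, after suppressing all vertices of indegree one and outdegree one,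
is isomorphic to `T` via an isomorphism fixing `X` pointwise. -/
def IsSubdivisionOf {V : Type u} (T' T : Net V) (X : Set V) : Prop :=
  IsRootedTree T' ∧ ∃ g, Net.NetIsoVia T T'.suppr g ∧ ∀ x ∈ X, g x = x

/-- `T` is a base tree for `N`: `N` can be obtained from `T` by subdividing
some arcs of `T`, adding arcs between the subdivision vertices without
creating parallel arcs or directed cycles, and suppressing all subdivision
vertices still of indegree one and outdegree one. -/
def IsBaseTreeFor {V : Type u} (T : Net V) (X : Set V) (N : Net V) : Prop :=
  ∃ T' G : Net V,
    IsSubdivisionOf T' T X ∧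
    G.verts = T'.verts ∧ G.root = T'.root ∧
    (∀ u v, T'.arcs u v ≤ G.arcs u v) ∧
    (∀ u v, T'.arcs u v ≠ G.arcs u v → T'.Suppressible u ∧ T'.Suppressible v) ∧
    G.NoParallel ∧ G.Acyclic ∧
    ∃ h, Net.NetIsoVia G.suppr N h ∧ ∀ x ∈ X, h x = x

end Phylo
namespace Phylo

/- ------------------------------------------------------------------
Auxiliary lemmas on walks, reachability, acyclicity and finiteness.
------------------------------------------------------------------- -/

namespace Net

variable {V : Type u} {N : Net V}

lemma endOf_nil (u : V) : endOf u ([] : List (Arc V)) = u := rfl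

lemma endOf_cons (u : V) (a : Arc V) (l : List (Arc V)) :
    endOf u (a :: l) = endOf a.2.1 l := by
  cases l with
  | nil => rfl
  | cons b t => simp only [endOf, List.getLastD_cons]

lemma endOf_eq_getLast (u : V) (l : List (Arc V)) (hl : l ≠ []) :
    endOf u l = (l.getLast hl).2.1 := by
  simp [endOf, List.getLastD_eq_getLast?, List.getLast?_eq_getLast hl]

lemma walkFrom_cons {u : V} {a : Arc V} {l : List (Arc V)}
    (h : N.WalkFrom u (a :: l)) :
    a.1 = u ∧ N.okArc a ∧ N.WalkFrom a.2.1 l := by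
  obtain ⟨hu, hok, hch, hhd⟩ := h
  have hoka : N.okArc a := hok a List.mem_cons_self
  obtain ⟨hrel, hch'⟩ := List.isChain_cons.mp hch
  exact ⟨hhd a rfl, hoka, hoka.2.1,
    fun b hb => hok b (List.mem_cons_of_mem a hb), hch',
    fun b hb => (hrel b hb).symm⟩

lemma walkFrom_cons' {u : V} {a : Arc V} {l : List (Arc V)}
    (hu : a.1 = u) (hok : N.okArc a) (h : N.WalkFrom a.2.1 l) :
    N.WalkFrom u (a :: l) := by
  obtain ⟨hv, hoks, hch, hhd⟩ := h
  refine ⟨hu ▸ hok.1, ?_, ?_, ?_⟩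
  · intro b hb
    rcases List.mem_cons.mp hb with rfl | hb'
    · exact hok
    · exact hoks b hb'
  · exact List.isChain_cons.mpr ⟨fun b hb => (hhd b hb).symm, hch⟩
  · intro b hb
    simp only [List.head?_cons, Option.mem_some_iff] at hb
    exact hb ▸ hu

lemma transGen_of_mem {u : V} {l : List (Arc V)} (h : N.WalkFrom u l)
    {a : Arc V} (ha : a ∈ l) :
    Relation.TransGen N.ArcRel u a.2.1 := by
  induction l generalizing u with
  | nil => cases ha
  | cons b t ih =>
    obtain ⟨hb, hok, ht⟩ := walkFrom_cons h
    have h1 : N.ArcRel u b.2.1 := by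
      have := hok.2.2
      rw [hb] at this
      exact Nat.lt_of_le_of_lt (Nat.zero_le _) this
    rcases List.mem_cons.mp ha with rfl | ha'
    · exact Relation.TransGen.single h1
    · exact (Relation.TransGen.single h1).trans (ih ht ha')

lemma mem_verts_endOf {u : V} {l : List (Arc V)} (h : N.WalkFrom u l) :
    endOf u l ∈ N.verts := by
  cases l with
  | nil => exact h.1
  | cons a t =>
    rw [endOf_eq_getLast u (a :: t) (List.cons_ne_nil a t)]
    exact (h.2.1 _ (List.getLast_mem (List.cons_ne_nil a t))).2.1

lemma transGen_endOf {u : V} {l : List (Arc V)} (h : N.WalkFrom u l)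
    (hl : l ≠ []) : Relation.TransGen N.ArcRel u (endOf u l) := by
  rw [endOf_eq_getLast u l hl]
  exact transGen_of_mem h (List.getLast_mem hl)

lemma walkFrom_append {u : V} {l₁ l₂ : List (Arc V)}
    (h1 : N.WalkFrom u l₁) (h2 : N.WalkFrom (endOf u l₁) l₂) :
    N.WalkFrom u (l₁ ++ l₂) ∧ endOf u (l₁ ++ l₂) = endOf (endOf u l₁) l₂ := by
  induction l₁ generalizing u with
  | nil => simpa [endOf_nil] using h2
  | cons a t ih =>
    obtain ⟨ha, hok, ht⟩ := walkFrom_cons h1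
    rw [endOf_cons] at h2
    obtain ⟨hw, he⟩ := ih ht h2
    refine ⟨walkFrom_cons' ha hok hw, ?_⟩
    rw [List.cons_append, endOf_cons, he, endOf_cons]

lemma reaches_trans {u v w : V} (h1 : N.Reaches u v) (h2 : N.Reaches v w) :
    N.Reaches u w := by
  obtain ⟨l₁, hw1, he1⟩ := h1
  obtain ⟨l₂, hw2, he2⟩ := h2
  rw [← he1] at hw2
  obtain ⟨hw, he⟩ := walkFrom_append hw1 hw2
  exact ⟨l₁ ++ l₂, hw, by rw [he, he1, he2]⟩

lemma reaches_self {u : V} (hu : u ∈ N.verts) : N.Reaches u u :=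
  ⟨[], ⟨hu, by simp, List.isChain_nil, by simp⟩, rfl⟩

lemma mem_verts_of_reaches {u v : V} (h : N.Reaches u v) : v ∈ N.verts := by
  obtain ⟨l, hw, he⟩ := h
  exact he ▸ mem_verts_endOf hw

lemma reaches_antisymm (hac : N.Acyclic) {u v : V}
    (h1 : N.Reaches u v) (h2 : N.Reaches v u) : u = v := by
  by_contra hne
  obtain ⟨l₁, hw1, he1⟩ := h1
  obtain ⟨l₂, hw2, he2⟩ := h2
  have hl1 : l₁ ≠ [] := by rintro rfl; exact hne he1
  have hl2 : l₂ ≠ [] := by rintro rfl; exact hne he2.symm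
  exact hac u (((he1 ▸ transGen_endOf hw1 hl1)).trans
    (he2 ▸ transGen_endOf hw2 hl2))

lemma walkVerts_nodup (hac : N.Acyclic) {u : V} {l : List (Arc V)}
    (h : N.WalkFrom u l) : (walkVerts u l).Nodup := by
  induction l generalizing u with
  | nil => simp [walkVerts]
  | cons a t ih =>
    obtain ⟨ha, hok, ht⟩ := walkFrom_cons h
    have harc : N.ArcRel u a.2.1 := by
      have := hok.2.2
      rw [ha] at this
      exact Nat.lt_of_le_of_lt (Nat.zero_le _) this
    have heq : walkVerts u (a :: t) = u :: walkVerts a.2.1 t := by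
      simp [walkVerts]
    rw [heq]
    refine List.nodup_cons.mpr ⟨?_, ih ht⟩
    intro hu
    have : u = a.2.1 ∨ u ∈ t.map (fun b => b.2.1) := by
      simpa [walkVerts] using hu
    rcases this with heq | hmem
    · cases heq; exact hac _ (Relation.TransGen.single harc)
    · obtain ⟨b, hb, hbu⟩ := List.mem_map.mp hmem
      exact hac u ((Relation.TransGen.single harc).trans
        (hbu ▸ transGen_of_mem ht hb))

lemma length_le_ncard (hfin : N.verts.Finite) (hac : N.Acyclic)
    {u : V} {l : List (Arc V)} (h : N.WalkFrom u l) :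
    l.length ≤ N.verts.ncard := by
  classical
  have hnd := walkVerts_nodup hac h
  have hsub : (walkVerts u l).toFinset ⊆ hfin.toFinset := by
    intro x hx
    rw [List.mem_toFinset] at hx
    rw [Set.Finite.mem_toFinset]
    rcases List.mem_cons.mp hx with rfl | hx'
    · exact h.1
    · obtain ⟨b, hb, hbx⟩ := List.mem_map.mp hx'
      exact hbx ▸ (h.2.1 b hb).2.1
  have hcard := Finset.card_le_card hsub
  rw [List.toFinset_card_of_nodup hnd] at hcard
  have hlen : (walkVerts u l).length = l.length + 1 := by simp [walkVerts]
  rw [hlen] at hcard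
  rw [Set.ncard_eq_toFinset_card N.verts hfin]
  omega

lemma finite_walkFrom (hfin : N.verts.Finite) (hac : N.Acyclic)
    (hnp : N.NoParallel) (u : V) :
    {l : List (Arc V) | N.WalkFrom u l}.Finite := by
  classical
  set A : Set (Arc V) := {a | N.okArc a} with hA
  have hAfin : A.Finite := by
    have hs : A ⊆ N.verts ×ˢ (N.verts ×ˢ Set.Iio 1) := by
      intro a ha
      exact ⟨ha.1, ha.2.1, lt_of_lt_of_le ha.2.2 (hnp _ _)⟩
    exact (hfin.prod (hfin.prod (Set.finite_Iio 1))).subset hs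
  have : Finite ↥A := hAfin.to_subtype
  have hfin2 : {l : List ↥A | l.length ≤ N.verts.ncard}.Finite :=
    List.finite_length_le ↥A _
  refine (hfin2.image (List.map Subtype.val)).subset ?_
  intro l hl
  refine ⟨l.pmap (fun a ha => (⟨a, ha⟩ : ↥A)) (fun a ha => hl.2.1 a ha), ?_, ?_⟩
  · simpa using length_le_ncard hfin hac hl
  · rw [List.map_pmap]
    simp

/-- The arc relation of the un-fold strictly increases path length. -/
lemma unfold_arcRel_length {X : Set V} {p q : List (Arc V)}
    (h : (unfoldNet N X).toNet.ArcRel p q) : p.length < q.length := by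
  have hpos : 0 < (unfoldNet N X).arcs p q := h
  by_cases hcond : p ∈ unfoldVerts N ∧ q ∈ unfoldVerts N ∧
      ∃ r, r ≠ [] ∧ q = p ++ r ∧ ∀ a ∈ r.dropLast, N.IsHybrid (a : Arc V).2.1
  · obtain ⟨-, -, r, hr, rfl, -⟩ := hcond
    simp only [List.length_append]
    have : 0 < r.length := List.length_pos_iff.mpr hr
    omega
  · exfalso
    have : (unfoldNet N X).arcs p q = 0 := by
      simp only [unfoldNet, if_neg hcond]
    rw [this] at hpos
    exact lt_irrefl 0 hpos

lemma unfold_acyclic (X : Set V) : (unfoldNet N X).toNet.Acyclic := by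
  intro p hp
  have key : ∀ q r : List (Arc V),
      Relation.TransGen (unfoldNet N X).toNet.ArcRel q r → q.length < r.length := by
    intro q r h
    induction h with
    | single h1 => exact unfold_arcRel_length h1
    | tail _ h1 ih => exact lt_trans ih (unfold_arcRel_length h1)
  exact lt_irrefl _ (key p p hp)

lemma unfold_verts_finite {X : Set V} (hfin : N.verts.Finite)
    (hac : N.Acyclic) (hnp : N.NoParallel) :
    (unfoldNet N X).toNet.verts.Finite :=
  (finite_walkFrom hfin hac hnp N.root).subset (fun _ hp => hp.1)

end Net

/-- **Lemma 5.**  Let `N` be a stable phylogenetic network on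
`X`, let `M = U(N)`, and let `C` be an `X`-set of `M`.  Then
`ξ̄_C⁺(V(M_C⁺)) ⊆ V(M)^C/∼`. -/
theorem image_subset_vmc {V : Type u} (X : Set V) (N : Net V)
    (hX : 3 ≤ X.ncard) (hN : IsStable N X)
    (C : Set (List (Arc V))) (hC : (Net.unfoldNet N X).IsXSet X C) :
    (Net.unfoldNet N X).eqClass '' ((Net.unfoldNet N X).subPlusVerts C) ⊆
      (Net.unfoldNet N X).eqClass '' ((Net.unfoldNet N X).vmc C) := by
  set M := Net.unfoldNet N X with hMdef
  have hfinN : N.verts.Finite := hN.1.finite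
  have hacN : N.Acyclic := hN.1.acyclic
  have hnp : N.NoParallel := hN.1.noParallel
  have hMfin : M.toNet.verts.Finite := Net.unfold_verts_finite hfinN hacN hnp
  have hMac : M.toNet.Acyclic := Net.unfold_acyclic X
  have key : M.subPlusVerts C ⊆ M.vmc C := by
    intro v hv
    obtain ⟨hrv, c, hc, hvc⟩ := hv
    set r := M.lcaOf C with hr
    by_cases hvr : v = r
    · exact hvr ▸ Set.mem_insert _ _
    refine Set.mem_insert_iff.mpr (Or.inr ⟨Net.mem_verts_of_reaches hrv, ?_⟩)
    intro u hu hsim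
    have hrverts : r ∈ M.toNet.verts := by
      obtain ⟨l, hw, -⟩ := hrv
      exact hw.1
    have hru : M.toNet.Reaches r u := Net.reaches_trans hrv hu
    by_cases hur : u = r
    · subst hur
      exact hvr (Net.reaches_antisymm hMac hrv hu).symm
    rcases hsim with rfl | ⟨η, hbij, -⟩
    · exact hur rfl
    · have hs : M.belowSet u ⊆ M.belowSet r :=
        fun w hw => Net.reaches_trans hru hw
      have hrn : r ∉ M.belowSet u := fun hcon =>
        hur (Net.reaches_antisymm hMac hcon hru)
      have hbt : (M.belowSet r).Finite :=
        hMfin.subset (fun w hw => Net.mem_verts_of_reaches hw)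
      have himg : η '' M.belowSet u = M.belowSet r := hbij.image_eq
      have hcard : (M.belowSet r).ncard ≤ (M.belowSet u).ncard := by
        rw [← himg]
        exact le_of_eq (Set.ncard_image_of_injOn hbij.injOn)
      have heq := Set.eq_of_subset_of_ncard_le hs hcard hbt
      rw [heq] at hrn
      exact hrn (Net.reaches_self hrverts)
  rintro s ⟨v, hv, rfl⟩
  exact ⟨v, key hv, rfl⟩

end Phylo
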